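/- Let G be a Polish group and P ⊆ G a perfect set. Then there is a perfect set Q ⊆ P such that Q is skew. -/

import Mathlib

set_option linter.unusedSectionVars false
set_option maxHeartbeats 1000000

def SkewSet {G : Type*} [AddGroup G] (Z : Set G) : Prop :=
  ∀ x ∈ Z, ∀ y ∈ Z, ∀ v ∈ Z, ∀ w ∈ Z,
    x ≠ y → v ≠ w → ({x, y} : Set G) ≠ ({v, w} : Set G) → x - y ≠ v - w

open Metric Set

section Work
variable {G : Type*} [MetricSpace G] [AddGroup G] [IsTopologicalAddGroup G]

def gmap (a q : G) : G := q - a + q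

lemma gmap_symm {a b q : G} : gmap a q = b ↔ gmap b q = a := by
  constructor <;> (intro h; rw [← h]; simp [gmap, sub_eq_add_neg, neg_add_rev, add_assoc])

lemma gmap_cont (a : G) : Continuous (gmap a) := by
  exact ((continuous_id.sub continuous_const).add continuous_id)

def EIP (P S : Set G) : Prop :=
  ∀ U : Set G, IsOpen U → (U ∩ P).Nonempty → ∃ q ∈ U ∩ P, q ∉ S

def GoodF (P : Set G) (F : Finset G) : Prop :=
  (↑F ⊆ P) ∧ SkewSet (↑F : Set G) ∧ ∀ a ∈ F, ∀ b ∈ F, a ≠ b → EIP P {q | gmap a q = b}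

lemma EIP_singleton {P : Set G} (hP : Perfect P) (t : G) : EIP P {t} := by
  intro U hU hne
  obtain ⟨x, hxU, hxP⟩ := hne
  obtain ⟨y, ⟨hyU, hyP⟩, hyx⟩ := accPt_iff_nhds.1 (hP.acc x hxP) U (hU.mem_nhds hxU)
  by_cases hx : x = t
  · exact ⟨y, ⟨hyU, hyP⟩, by simp [hx ▸ hyx]⟩
  · exact ⟨x, ⟨hxU, hxP⟩, by simp [hx]⟩

def BadSet (P : Set G) (a : G) : Set G := {p | ¬ EIP P {q | gmap a q = p}}

lemma badSet_countable [SecondCountableTopology G] (P : Set G) (a : G) :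
    (BadSet P a).Countable := by
  obtain ⟨b, hbc, -, hbasis⟩ := TopologicalSpace.exists_countable_basis G
  have : BadSet P a ⊆ ⋃ B ∈ b, {p | (B ∩ P).Nonempty ∧ B ∩ P ⊆ gmap a ⁻¹' {p}} := by
    intro p hp
    simp only [BadSet, EIP, mem_setOf_eq] at hp
    push_neg at hp
    obtain ⟨U, hU, hUne, hUsub⟩ := hp
    obtain ⟨x, hxU, hxP⟩ := hUne
    obtain ⟨B, hBb, hxB, hBU⟩ := hbasis.exists_subset_of_mem_open hxU hU
    refine mem_iUnion₂.2 ⟨B, hBb, ⟨x, hxB, hxP⟩, ?_⟩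
    intro q ⟨hqB, hqP⟩
    simpa using hUsub q ⟨hBU hqB, hqP⟩
  refine Set.Countable.mono this (Set.Countable.biUnion hbc ?_)
  intro B _
  apply Set.Subsingleton.countable
  intro p hp p' hp'
  obtain ⟨⟨x, hx⟩, hsub⟩ := hp
  obtain ⟨-, hsub'⟩ := hp'
  have h1 := hsub hx
  have h2 := hsub' hx
  simp only [mem_preimage, mem_singleton_iff] at h1 h2
  rw [← h1, ← h2]

lemma dense_compl_of_EIP {P S : Set G} (h : EIP P S) :
    Dense {q : ↥P | (q : G) ∉ S} := by
  rw [dense_iff_inter_open]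
  intro W hW hWne
  obtain ⟨U, hU, rfl⟩ := isOpen_induced_iff.1 hW
  obtain ⟨⟨x, hxP⟩, hxU⟩ := hWne
  obtain ⟨q, ⟨hqU, hqP⟩, hqS⟩ := h U hU ⟨x, hxU, hxP⟩
  exact ⟨⟨q, hqP⟩, hqU, hqS⟩

lemma sub_helperA {a b c : G} (h : a - b = c) : a = c + b := sub_eq_iff_eq_add.mp h
lemma sub_helperB {a b c : G} (h : a - b = c) : b = -c + a := by
  rw [← h]; simp [sub_eq_add_neg, neg_add_rev, add_assoc]

lemma pick [CompleteSpace G] [SecondCountableTopology G] [DecidableEq G] {P : Set G} (hP : Perfect P)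
    (F : Finset G) (hG : GoodF P F) (V : Set G) (hV : IsOpen V) (hne : (V ∩ P).Nonempty) :
    ∃ p, p ∈ V ∩ P ∧ p ∉ F ∧ GoodF P (insert p F) := by
  classical
  haveI : CompleteSpace ↥P := hP.closed.completeSpace_coe
  set D : Set G := ↑F ∪ (⋃ a ∈ (↑F : Set G), ⋃ b ∈ (↑F : Set G), ⋃ c ∈ (↑F : Set G),
      {b - c + a, -(b - c) + a}) ∪ (⋃ a ∈ (↑F : Set G), BadSet P a) with hD
  have hDc : D.Countable := by
    refine ((F.finite_toSet.countable).union ?_).union ?_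
    · exact Set.Countable.biUnion F.finite_toSet.countable fun a _ =>
        Set.Countable.biUnion F.finite_toSet.countable fun b _ =>
        Set.Countable.biUnion F.finite_toSet.countable fun c _ =>
        (Set.countable_singleton _).insert _
    · exact Set.Countable.biUnion F.finite_toSet.countable fun a _ => badSet_countable P a
  haveI : Countable ↥D := hDc.to_subtype
  haveI : Countable ↥(↑(F ×ˢ F) : Set (G × G)) := (F ×ˢ F).finite_toSet.countable.to_subtype
  set f : (↥(↑(F ×ˢ F) : Set (G × G)) ⊕ ↥D) → Set ↥P :=
    Sum.elim
      (fun ab => if (ab : G × G).1 ≠ (ab : G × G).2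
        then {q : ↥P | ¬ gmap (ab : G × G).1 (q : G) = (ab : G × G).2} else univ)
      (fun t => {q : ↥P | (q : G) ≠ (t : G)}) with hf
  have hopen : ∀ i, IsOpen (f i) := by
    rintro (ab | t)
    · by_cases hab : (ab : G × G).1 ≠ (ab : G × G).2
      · simp only [hf, Sum.elim_inl, if_pos hab]
        exact (isClosed_eq ((gmap_cont _).comp continuous_subtype_val) continuous_const).isOpen_compl
      · simp only [hf, Sum.elim_inl, if_neg hab]; exact isOpen_univ
    · exact (isClosed_eq continuous_subtype_val continuous_const).isOpen_compl
  have hdense : ∀ i, Dense (f i) := by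
    rintro (ab | t)
    · by_cases hab : (ab : G × G).1 ≠ (ab : G × G).2
      · simp only [hf, Sum.elim_inl, if_pos hab]
        have hmem := ab.2
        rw [Finset.mem_coe, Finset.mem_product] at hmem
        exact dense_compl_of_EIP (hG.2.2 _ hmem.1 _ hmem.2 hab)
      · simp only [hf, Sum.elim_inl, if_neg hab]; exact dense_univ
    · exact dense_compl_of_EIP (EIP_singleton hP (t : G))
  have hbig : Dense (⋂ i, f i) := dense_iInter_of_isOpen hopen hdense
  have hVne' : ((Subtype.val ⁻¹' V : Set ↥P)).Nonempty := by
    obtain ⟨x, hxV, hxP⟩ := hne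
    exact ⟨⟨x, hxP⟩, hxV⟩
  obtain ⟨q, hq1, hq2⟩ := hbig.inter_open_nonempty _ (hV.preimage continuous_subtype_val) hVne'
  simp only [mem_iInter] at hq2
  set p : G := (q : G) with hp
  have hpP : p ∈ P := q.2
  have hpD : p ∉ D := fun h => (hq2 (Sum.inr ⟨p, h⟩)) rfl
  have hpF : p ∉ F := fun h => hpD (Or.inl (Or.inl h))
  have hforb : ∀ a ∈ F, ∀ b ∈ F, ∀ c ∈ F, p ≠ b - c + a ∧ p ≠ -(b - c) + a := by
    intro a ha b hb c hc
    constructor <;> intro hEq <;> refine hpD (Or.inl (Or.inr ?_)) <;>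
      refine mem_iUnion₂.2 ⟨a, ha, mem_iUnion₂.2 ⟨b, hb, mem_iUnion₂.2 ⟨c, hc, ?_⟩⟩⟩
    · exact Or.inl hEq
    · exact Or.inr hEq
  have hbad : ∀ a ∈ F, EIP P {x | gmap a x = p} := by
    intro a ha
    by_contra h
    exact hpD (Or.inr (mem_iUnion₂.2 ⟨a, ha, h⟩))
  have hgm : ∀ a ∈ F, ∀ b ∈ F, a ≠ b → gmap a p ≠ b := by
    intro a ha b hb hab hEq
    have h := hq2 (Sum.inl ⟨(a, b), by rw [Finset.mem_coe, Finset.mem_product]; exact ⟨ha, hb⟩⟩)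
    simp only [hf, Sum.elim_inl, if_pos hab, mem_setOf_eq] at h
    exact h hEq
  refine ⟨p, ⟨hq1, hpP⟩, hpF, ?_, ?_, ?_⟩
  · intro x hx
    rcases Finset.mem_insert.1 (by exact_mod_cast hx) with rfl | hxF
    · exact hpP
    · exact hG.1 hxF
  · -- SkewSet
    intro x hx y hy v hv w hw hxy hvw hsets heq
    simp only [Finset.coe_insert, Set.mem_insert_iff, Finset.mem_coe] at hx hy hv hw
    rcases hx with rfl | hx <;> rcases hy with rfl | hy <;>
      rcases hv with rfl | hv <;> rcases hw with rfl | hw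
    · exact hxy rfl
    · exact hxy rfl
    · exact hxy rfl
    · exact hxy rfl
    · exact hvw rfl
    · -- x=p, v=p : p - y = p - w ⇒ y = w
      have : y = w := sub_right_inj.mp heq
      exact hsets (by rw [this])
    · -- x=p, w=p : p - y = v - p ⇒ gmap y p = v
      have hyv : y ≠ v := fun h => hsets (by rw [h, Set.pair_comm])
      exact hgm y hy v hv hyv (by rw [gmap, heq, sub_add_cancel])
    · -- x=p rest in F : p = (v-w)+y
      exact (hforb y hy v hv w hw).1 (sub_helperA heq)
    · exact hvw rfl
    · -- y=p, v=p : x - p = p - w ⇒ gmap w p = x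
      have hwx : w ≠ x := fun h => hsets (by rw [h, Set.pair_comm])
      exact hgm w hw x hx hwx (by rw [gmap, ← heq, sub_add_cancel])
    · -- y=p, w=p : x - p = v - p ⇒ x = v
      have : x = v := sub_left_inj.mp heq
      exact hsets (by rw [this])
    · -- y=p rest in F : p = -(v-w)+x
      exact (hforb x hx v hv w hw).2 (sub_helperB heq)
    · exact hvw rfl
    · -- v=p : p = (x-y)+w
      exact (hforb w hw x hx y hy).1 (sub_helperA heq.symm)
    · -- w=p : p = -(x-y)+v
      exact (hforb v hv x hx y hy).2 (sub_helperB heq.symm)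
    · exact hG.2.1 x hx y hy v hv w hw hxy hvw hsets heq
  · -- condition (iii) for insert
    intro a ha b hb hab
    rcases Finset.mem_insert.1 ha with rfl | haF <;> rcases Finset.mem_insert.1 hb with rfl | hbF
    · exact absurd rfl hab
    · have : {q : G | gmap p q = b} = {q | gmap b q = p} := by
        ext q; exact gmap_symm
      rw [this]
      exact hbad b hbF
    · exact hbad a haF
    · exact hG.2.2 a haF b hbF hab

lemma multipick [CompleteSpace G] [SecondCountableTopology G] [DecidableEq G] {P : Set G}
    (hP : Perfect P) (hPne : P.Nonempty) {ι : Type*} [DecidableEq ι]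
    (V : ι → Set G) (hVo : ∀ i, IsOpen (V i)) (hVne : ∀ i, (V i ∩ P).Nonempty)
    (I : Finset ι) (F : Finset G) (hG : GoodF P F) :
    ∃ p : ι → G, (∀ i ∈ I, p i ∈ V i ∩ P) ∧ Set.InjOn p ↑I ∧ (∀ i ∈ I, p i ∉ F) ∧
      GoodF P (F ∪ I.image p) := by
  classical
  induction I using Finset.induction_on with
  | empty =>
    refine ⟨fun _ => hPne.choose, by simp, by simp [Set.InjOn], by simp, by simpa using hG⟩
  | @insert j J hj ih =>
    obtain ⟨p, hp1, hp2, hp3, hp4⟩ := ih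
    obtain ⟨q, hqVP, hqF', hGood'⟩ := pick hP (F ∪ J.image p) hp4 (V j) (hVo j) (hVne j)
    refine ⟨Function.update p j q, ?_, ?_, ?_, ?_⟩
    · intro i hi
      rcases Finset.mem_insert.1 hi with rfl | hiJ
      · rw [Function.update_self]; exact hqVP
      · rw [Function.update_of_ne (by rintro rfl; exact hj hiJ)]; exact hp1 i hiJ
    · intro i₁ h₁ i₂ h₂ hEq
      simp only [Finset.coe_insert, Set.mem_insert_iff, Finset.mem_coe] at h₁ h₂
      rcases h₁ with rfl | h₁ <;> rcases h₂ with rfl | h₂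
      · rfl
      · exfalso
        rw [Function.update_self, Function.update_of_ne (by rintro rfl; exact hj h₂)] at hEq
        exact hqF' (Finset.mem_union_right _ (Finset.mem_image.2 ⟨i₂, h₂, hEq.symm⟩))
      · exfalso
        rw [Function.update_self, Function.update_of_ne (by rintro rfl; exact hj h₁)] at hEq
        exact hqF' (Finset.mem_union_right _ (Finset.mem_image.2 ⟨i₁, h₁, hEq⟩))
      · rw [Function.update_of_ne (by rintro rfl; exact hj h₁),
          Function.update_of_ne (by rintro rfl; exact hj h₂)] at hEq
        exact hp2 h₁ h₂ hEq
    · intro i hi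
      rcases Finset.mem_insert.1 hi with rfl | hiJ
      · rw [Function.update_self]
        exact fun h => hqF' (Finset.mem_union_left _ h)
      · rw [Function.update_of_ne (by rintro rfl; exact hj hiJ)]; exact hp3 i hiJ
    · have himg : (insert j J).image (Function.update p j q) = insert q (J.image p) := by
        rw [Finset.image_insert, Function.update_self]
        congr 1
        apply Finset.image_congr
        intro i hi
        exact Function.update_of_ne (by rintro rfl; exact hj hi) _ _
      rw [himg, Finset.union_insert]
      exact hGood'

lemma sep_pair {a b : G} (h : a ≠ b) :
    ∃ ε > 0, ∀ x y : G, dist x a ≤ ε → dist y b ≤ ε → x ≠ y := by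
  have hd : 0 < dist a b := dist_pos.2 h
  refine ⟨dist a b / 3, by linarith, ?_⟩
  rintro x y hx hy rfl
  have := dist_triangle a x b
  rw [dist_comm a x] at this
  linarith

lemma sep_four {a b c d : G} (h : a - b ≠ c - d) :
    ∃ ε > 0, ∀ x y z w : G, dist x a ≤ ε → dist y b ≤ ε → dist z c ≤ ε → dist w d ≤ ε →
      x - y ≠ z - w := by
  have hU : IsOpen {q : (G × G) × G × G | q.1.1 - q.1.2 = q.2.1 - q.2.2}ᶜ := by
    refine (isClosed_eq ?_ ?_).isOpen_compl
    · exact (continuous_fst.comp continuous_fst).sub (continuous_snd.comp continuous_fst)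
    · exact (continuous_fst.comp continuous_snd).sub (continuous_snd.comp continuous_snd)
  obtain ⟨ε, hε, hball⟩ := Metric.isOpen_iff.1 hU ((a, b), (c, d)) h
  refine ⟨ε / 2, by linarith, fun x y z w hx hy hz hw => ?_⟩
  have hmem : ((x, y), (z, w)) ∈ Metric.ball ((a, b), (c, d)) ε := by
    rw [Metric.mem_ball, Prod.dist_eq]
    simp only [Prod.dist_eq]
    refine max_lt (max_lt ?_ ?_) (max_lt ?_ ?_) <;> linarith
  exact hball hmem

def LD (G : Type*) (n : ℕ) := ((Fin n → Bool) → G) × ((Fin n → Bool) → ℝ)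

def SInv [DecidableEq G] (P : Set G) (n : ℕ) (d : LD G n) : Prop :=
  Function.Injective d.1 ∧ GoodF P (Finset.image d.1 Finset.univ) ∧
  (∀ s, 0 < d.2 s) ∧ (∀ s, d.2 s ≤ (2:ℝ)⁻¹ ^ n) ∧
  (∀ s t, s ≠ t → ∀ x, x ∈ Metric.closedBall (d.1 s) (d.2 s) →
    x ∉ Metric.closedBall (d.1 t) (d.2 t)) ∧
  (∀ s t u v, s ≠ t → u ≠ v → ¬((s = u ∧ t = v) ∨ (s = v ∧ t = u)) →
    ∀ x ∈ Metric.closedBall (d.1 s) (d.2 s), ∀ y ∈ Metric.closedBall (d.1 t) (d.2 t),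
    ∀ z ∈ Metric.closedBall (d.1 u) (d.2 u), ∀ w ∈ Metric.closedBall (d.1 v) (d.2 v),
      x - y ≠ z - w)

def SRel (n : ℕ) (d : LD G n) (d' : LD G (n+1)) : Prop :=
  ∀ s : Fin (n+1) → Bool,
    Metric.closedBall (d'.1 s) (d'.2 s) ⊆
      Metric.closedBall (d.1 (s ∘ Fin.castSucc)) (d.2 (s ∘ Fin.castSucc))

lemma funsplit {n : ℕ} {s t : Fin (n+1) → Bool} (h1 : s ∘ Fin.castSucc = t ∘ Fin.castSucc)
    (h2 : s (Fin.last n) = t (Fin.last n)) : s = t := by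
  funext i
  refine Fin.lastCases ?_ ?_ i
  · exact h2
  · exact fun j => congrFun h1 j

lemma step [CompleteSpace G] [SecondCountableTopology G] [DecidableEq G] {P : Set G}
    (hP : Perfect P) (hPne : P.Nonempty) (n : ℕ) (d : LD G n) (hd : SInv P n d) :
    ∃ d' : LD G (n+1), SInv P (n+1) d' ∧ SRel n d d' := by
  classical
  obtain ⟨hinj, hGood, hrpos, hrle, hdisj, hquad⟩ := hd
  set c := d.1 with hc
  set r := d.2 with hr
  have hVo : ∀ s : Fin n → Bool, IsOpen (Metric.ball (c s) (r s)) := fun s => Metric.isOpen_ball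
  have hcP : ∀ s, c s ∈ P := fun s =>
    hGood.1 (Finset.mem_coe.2 (Finset.mem_image.2 ⟨s, Finset.mem_univ s, rfl⟩))
  have hVne : ∀ s, (Metric.ball (c s) (r s) ∩ P).Nonempty := fun s =>
    ⟨c s, Metric.mem_ball_self (hrpos s), hcP s⟩
  obtain ⟨p, hp1, hp2, hp3, hp4⟩ := multipick hP hPne _ hVo hVne Finset.univ _ hGood
  set c' : (Fin (n+1) → Bool) → G := fun s =>
    if s (Fin.last n) = true then p (s ∘ Fin.castSucc) else c (s ∘ Fin.castSucc) with hc'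
  have hsc : ∀ (t : Fin n → Bool) (b : Bool),
      ((Fin.snoc t b : Fin (n+1) → Bool) ∘ Fin.castSucc) = t := by
    intro t b; funext i; simp
  have hpF : ∀ s : Fin n → Bool, ∀ t : Fin n → Bool, p s ≠ c t := by
    intro s t hEq
    exact hp3 s (Finset.mem_univ s)
      (Finset.mem_image.2 ⟨t, Finset.mem_univ t, hEq.symm⟩)
  have hinj' : Function.Injective c' := by
    intro s t hEq
    simp only [hc'] at hEq
    by_cases hs : s (Fin.last n) = true <;> by_cases ht : t (Fin.last n) = true
    · rw [if_pos hs, if_pos ht] at hEq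
      exact funsplit (hp2 (by simp) (by simp) hEq) (by rw [hs, ht])
    · rw [if_pos hs, if_neg ht] at hEq
      exact absurd hEq (hpF _ _)
    · rw [if_neg hs, if_pos ht] at hEq
      exact absurd hEq.symm (hpF _ _)
    · rw [if_neg hs, if_neg ht] at hEq
      refine funsplit (hinj hEq) ?_
      simp only [Bool.not_eq_true] at hs ht
      rw [hs, ht]
  have himage : Finset.image c' Finset.univ =
      Finset.image c Finset.univ ∪ Finset.image p Finset.univ := by
    ext z
    simp only [Finset.mem_image, Finset.mem_union, Finset.mem_univ, true_and]
    constructor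
    · rintro ⟨s, rfl⟩
      by_cases hs : s (Fin.last n) = true
      · exact Or.inr ⟨s ∘ Fin.castSucc, by simp only [hc', if_pos hs]⟩
      · exact Or.inl ⟨s ∘ Fin.castSucc, by simp only [hc', if_neg hs]⟩
    · rintro (⟨t, rfl⟩ | ⟨t, rfl⟩)
      · refine ⟨Fin.snoc t false, ?_⟩
        simp only [hc', Fin.snoc_last, Bool.false_eq_true, if_false, hsc]
      · refine ⟨Fin.snoc t true, ?_⟩
        simp only [hc', Fin.snoc_last, if_true, hsc]
  have hGood' : GoodF P (Finset.image c' Finset.univ) := by rw [himage]; exact hp4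
  have hc'P : ∀ s, c' s ∈ P :=
    fun s => hGood'.1 (Finset.mem_coe.2 (Finset.mem_image.2 ⟨s, Finset.mem_univ s, rfl⟩))
  have hcdiff : ∀ s t u v : Fin (n+1) → Bool, s ≠ t → u ≠ v →
      ¬((s = u ∧ t = v) ∨ (s = v ∧ t = u)) → c' s - c' t ≠ c' u - c' v := by
    intro s t u v hst huv hb hEq
    have hmem : ∀ s : Fin (n+1) → Bool, c' s ∈ (↑(Finset.image c' Finset.univ) : Set G) :=
      fun s => Finset.mem_coe.2 (Finset.mem_image.2 ⟨s, Finset.mem_univ s, rfl⟩)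
    refine hGood'.2.1 _ (hmem s) _ (hmem t) _ (hmem u) _ (hmem v)
      (fun h => hst (hinj' h)) (fun h => huv (hinj' h)) ?_ hEq
    intro hpq
    rcases Set.pair_eq_pair_iff.1 hpq with ⟨h1, h2⟩ | ⟨h1, h2⟩
    · exact hb (Or.inl ⟨hinj' h1, hinj' h2⟩)
    · exact hb (Or.inr ⟨hinj' h1, hinj' h2⟩)
  -- epsilon for pair separation
  have e2ex : ∀ st : (Fin (n+1) → Bool) × (Fin (n+1) → Bool), ∃ ε, 0 < ε ∧ (st.1 ≠ st.2 →
      ∀ x y : G, dist x (c' st.1) ≤ ε → dist y (c' st.2) ≤ ε → x ≠ y) := by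
    intro st
    by_cases h : st.1 = st.2
    · exact ⟨1, one_pos, fun hne => absurd h hne⟩
    · obtain ⟨ε, hε, hspec⟩ := sep_pair (fun hh => h (hinj' hh))
      exact ⟨ε, hε, fun _ => hspec⟩
  choose e2 he2pos he2 using e2ex
  have e4ex : ∀ q : ((Fin (n+1) → Bool) × (Fin (n+1) → Bool)) ×
      ((Fin (n+1) → Bool) × (Fin (n+1) → Bool)), ∃ ε, 0 < ε ∧
      ((q.1.1 ≠ q.1.2 ∧ q.2.1 ≠ q.2.2 ∧
        ¬((q.1.1 = q.2.1 ∧ q.1.2 = q.2.2) ∨ (q.1.1 = q.2.2 ∧ q.1.2 = q.2.1))) →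
      ∀ x y z w : G, dist x (c' q.1.1) ≤ ε → dist y (c' q.1.2) ≤ ε →
        dist z (c' q.2.1) ≤ ε → dist w (c' q.2.2) ≤ ε → x - y ≠ z - w) := by
    intro q
    by_cases h : q.1.1 ≠ q.1.2 ∧ q.2.1 ≠ q.2.2 ∧
        ¬((q.1.1 = q.2.1 ∧ q.1.2 = q.2.2) ∨ (q.1.1 = q.2.2 ∧ q.1.2 = q.2.1))
    · obtain ⟨ε, hε, hspec⟩ := sep_four (hcdiff _ _ _ _ h.1 h.2.1 h.2.2)
      exact ⟨ε, hε, fun _ => hspec⟩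
    · exact ⟨1, one_pos, fun hh => absurd hh h⟩
  choose e4 he4pos he4 using e4ex
  have hne2 : (Finset.univ : Finset ((Fin (n+1) → Bool) × (Fin (n+1) → Bool))).Nonempty :=
    Finset.univ_nonempty
  have hne4 : (Finset.univ : Finset (((Fin (n+1) → Bool) × (Fin (n+1) → Bool)) ×
      ((Fin (n+1) → Bool) × (Fin (n+1) → Bool)))).Nonempty := Finset.univ_nonempty
  set εm : ℝ := min (Finset.univ.inf' hne2 e2) (Finset.univ.inf' hne4 e4) with hεm
  have hεmpos : 0 < εm := by
    refine lt_min ?_ ?_ <;> rw [Finset.lt_inf'_iff]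
    · exact fun i _ => he2pos i
    · exact fun i _ => he4pos i
  have hεm2 : ∀ st, εm ≤ e2 st := fun st =>
    le_trans (min_le_left _ _) (Finset.inf'_le _ (Finset.mem_univ st))
  have hεm4 : ∀ q, εm ≤ e4 q := fun q =>
    le_trans (min_le_right _ _) (Finset.inf'_le _ (Finset.mem_univ q))
  set ρ : (Fin (n+1) → Bool) → ℝ := fun s => if s (Fin.last n) = true then
      r (s ∘ Fin.castSucc) - dist (p (s ∘ Fin.castSucc)) (c (s ∘ Fin.castSucc))
    else r (s ∘ Fin.castSucc) with hρ
  have hρpos : ∀ s, 0 < ρ s := by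
    intro s
    by_cases hs : s (Fin.last n) = true
    · simp only [hρ, if_pos hs]
      have := (hp1 (s ∘ Fin.castSucc) (Finset.mem_univ _)).1
      rw [Metric.mem_ball] at this
      linarith
    · simp only [hρ, if_neg hs]; exact hrpos _
  set r' : (Fin (n+1) → Bool) → ℝ := fun s => min (min (ρ s) ((2:ℝ)⁻¹ ^ (n+1))) εm with hr'
  have hr'pos : ∀ s, 0 < r' s := fun s =>
    lt_min (lt_min (hρpos s) (by positivity)) hεmpos
  have hr'εm : ∀ s, r' s ≤ εm := fun s => min_le_right _ _
  have hRel : SRel n d ⟨c', r'⟩ := by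
    intro s x hx
    rw [Metric.mem_closedBall] at hx ⊢
    have hxρ : dist x (c' s) ≤ ρ s := le_trans hx (le_trans (min_le_left _ _) (min_le_left _ _))
    by_cases hs : s (Fin.last n) = true
    · have hcs : c' s = p (s ∘ Fin.castSucc) := by simp only [hc', if_pos hs]
      rw [hcs] at hxρ
      have hb := dist_triangle x (p (s ∘ Fin.castSucc)) (c (s ∘ Fin.castSucc))
      have : ρ s = r (s ∘ Fin.castSucc) - dist (p (s ∘ Fin.castSucc)) (c (s ∘ Fin.castSucc)) := by
        rw [hρ]; simp only [if_pos hs]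
      rw [this] at hxρ
      calc dist x (c (s ∘ Fin.castSucc)) ≤ _ := hb
        _ ≤ r (s ∘ Fin.castSucc) := by linarith
    · have hcs : c' s = c (s ∘ Fin.castSucc) := by simp only [hc', if_neg hs]
      have : ρ s = r (s ∘ Fin.castSucc) := by simp only [hρ, if_neg hs]
      rw [hcs, this] at hxρ
      exact hxρ
  refine ⟨⟨c', r'⟩, ⟨hinj', hGood', hr'pos, ?_, ?_, ?_⟩, hRel⟩
  · exact fun s => le_trans (min_le_left _ _) (min_le_right _ _)
  · intro s t hst x hxs hxt
    rw [Metric.mem_closedBall] at hxs hxt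
    exact he2 (s, t) hst x x (le_trans hxs (le_trans (hr'εm s) (hεm2 (s, t))))
      (le_trans hxt (le_trans (hr'εm t) (hεm2 (s, t)))) rfl
  · intro s t u v hst huv hb x hxs y hyt z hzu w hwv
    rw [Metric.mem_closedBall] at hxs hyt hzu hwv
    exact he4 ((s, t), (u, v)) ⟨hst, huv, hb⟩ x y z w
      (le_trans hxs (le_trans (hr'εm s) (hεm4 _)))
      (le_trans hyt (le_trans (hr'εm t) (hεm4 _)))
      (le_trans hzu (le_trans (hr'εm u) (hεm4 _)))
      (le_trans hwv (le_trans (hr'εm v) (hεm4 _)))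

def res (σ : ℕ → Bool) (n : ℕ) : Fin n → Bool := fun i => σ i

lemma base_ex [DecidableEq G] {P : Set G} (hPne : P.Nonempty) :
    ∃ d : LD G 0, SInv P 0 d := by
  refine ⟨⟨fun _ => hPne.choose, fun _ => 1⟩, ?_, ⟨?_, ?_, ?_⟩, fun _ => one_pos, ?_, ?_, ?_⟩
  · intro a b _
    exact funext fun i => i.elim0
  · intro x hx
    simp only [Finset.coe_image, Finset.coe_univ, Set.image_univ, Set.mem_range] at hx
    obtain ⟨s, rfl⟩ := hx
    exact hPne.choose_spec
  · intro x hx y hy v hv w hw hxy hvw hsets heq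
    simp only [Finset.coe_image, Finset.coe_univ, Set.image_univ, Set.mem_range] at hx hy
    obtain ⟨s, rfl⟩ := hx
    obtain ⟨t, rfl⟩ := hy
    exact hxy rfl
  · intro a ha b hb hab
    simp only [Finset.mem_image, Finset.mem_univ, true_and] at ha hb
    obtain ⟨s, rfl⟩ := ha
    obtain ⟨t, rfl⟩ := hb
    exact absurd rfl hab
  · intro s; norm_num
  · intro s t hst
    exact absurd (funext fun i => i.elim0) hst
  · intro s t u v hst
    exact absurd (funext fun i => i.elim0) hst

theorem main {G : Type*} [MetricSpace G] [AddGroup G] [IsTopologicalAddGroup G]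
    [CompleteSpace G] [SecondCountableTopology G]
    (P : Set G) (hP : Perfect P) (hPne : P.Nonempty) :
    ∃ Q ⊆ P, Perfect Q ∧ Q.Nonempty ∧ SkewSet Q := by
  classical
  obtain ⟨d0, hd0⟩ := base_ex (G := G) hPne
  choose f hf1 hf2 using fun (k : ℕ) (d : LD G k) (hd : SInv P k d) => step hP hPne k d hd
  let D : ∀ n : ℕ, {d : LD G n // SInv P n d} :=
    fun n => Nat.rec ⟨d0, hd0⟩ (fun k prev => ⟨f k prev.1 prev.2, hf1 k prev.1 prev.2⟩) n
  have hDrel : ∀ n, SRel n (D n).1 (D (n+1)).1 := fun n => hf2 n (D n).1 (D n).2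
  have hI : ∀ n, SInv P n (D n).1 := fun n => (D n).2
  have hinj : ∀ n, Function.Injective (D n).1.1 := fun n => (hI n).1
  have hcP : ∀ n s, (D n).1.1 s ∈ P := fun n s =>
    (hI n).2.1.1 (Finset.mem_coe.2 (Finset.mem_image.2 ⟨s, Finset.mem_univ s, rfl⟩))
  have hrpos : ∀ n s, 0 < (D n).1.2 s := fun n => (hI n).2.2.1
  have hrle : ∀ n s, (D n).1.2 s ≤ (2:ℝ)⁻¹ ^ n := fun n => (hI n).2.2.2.1
  have hdisj := fun n => (hI n).2.2.2.2.1
  have hquad := fun n => (hI n).2.2.2.2.2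
  have hres : ∀ (σ : ℕ → Bool) (n : ℕ), (res σ (n+1)) ∘ Fin.castSucc = res σ n :=
    fun σ n => funext fun i => rfl
  -- nested balls
  have hnest : ∀ (σ : ℕ → Bool) (n m : ℕ), n ≤ m →
      Metric.closedBall ((D m).1.1 (res σ m)) ((D m).1.2 (res σ m)) ⊆
      Metric.closedBall ((D n).1.1 (res σ n)) ((D n).1.2 (res σ n)) := by
    intro σ n m hnm
    refine Nat.le_induction ?_ ?_ m hnm
    · exact subset_rfl
    · intro m hm ih
      refine subset_trans ?_ ih
      have h2 := hDrel m (res σ (m+1))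
      rwa [hres σ m] at h2
  set u : (ℕ → Bool) → ℕ → G := fun σ n => (D n).1.1 (res σ n) with hu
  have humem : ∀ σ n m, n ≤ m →
      u σ m ∈ Metric.closedBall (u σ n) ((D n).1.2 (res σ n)) := by
    intro σ n m hnm
    exact hnest σ n m hnm (Metric.mem_closedBall_self (le_of_lt (hrpos m _)))
  have hcauchy : ∀ σ, CauchySeq (u σ) := by
    intro σ
    refine cauchySeq_of_le_geometric (2:ℝ)⁻¹ 1 (by norm_num) ?_
    intro n
    rw [one_mul, dist_comm]
    exact le_trans (Metric.mem_closedBall.1 (humem σ n (n+1) (Nat.le_succ n))) (hrle n _)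
  choose Φ hΦ using fun σ => cauchySeq_tendsto_of_complete (hcauchy σ)
  have hΦball : ∀ σ n, Φ σ ∈ Metric.closedBall (u σ n) ((D n).1.2 (res σ n)) := by
    intro σ n
    refine Metric.isClosed_closedBall.mem_of_tendsto (hΦ σ) ?_
    exact Filter.eventually_atTop.2 ⟨n, fun m hm => humem σ n m hm⟩
  have hΦP : ∀ σ, Φ σ ∈ P := by
    intro σ
    exact hP.closed.mem_of_tendsto (hΦ σ) (Filter.Eventually.of_forall fun n => hcP n _)
  have hΦinj : Function.Injective Φ := by
    intro σ τ hEq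
    by_contra hne
    obtain ⟨i, hi⟩ := Function.ne_iff.1 hne
    have hresne : res σ (i+1) ≠ res τ (i+1) := by
      intro h
      exact hi (congrFun h ⟨i, Nat.lt_succ_self i⟩)
    refine hdisj (i+1) _ _ hresne (Φ σ) (hΦball σ (i+1)) ?_
    rw [hEq]
    exact hΦball τ (i+1)
  have hclose : ∀ σ τ n, res σ n = res τ n → dist (Φ σ) (Φ τ) ≤ 2 * (2:ℝ)⁻¹ ^ n := by
    intro σ τ n h
    have h1 := Metric.mem_closedBall.1 (hΦball σ n)
    have h2 := Metric.mem_closedBall.1 (hΦball τ n)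
    have hut : u τ n = u σ n := by rw [hu]; simp only []; rw [h]
    rw [hut] at h2
    have := dist_triangle (Φ σ) (u σ n) (Φ τ)
    rw [dist_comm (u σ n) (Φ τ)] at this
    have hr1 := hrle n (res σ n)
    have hr2 := hrle n (res τ n)
    rw [← h] at hr2 h2
    linarith
  have hagree_nhds : ∀ (σ : ℕ → Bool) (n : ℕ), {τ : ℕ → Bool | res τ n = res σ n} ∈ nhds σ := by
    intro σ n
    have hopen : IsOpen {τ : ℕ → Bool | res τ n = res σ n} := by
      have : {τ : ℕ → Bool | res τ n = res σ n} = ⋂ i : Fin n, {τ : ℕ → Bool | τ i = σ i} := by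
        ext τ
        simp only [Set.mem_setOf_eq, Set.mem_iInter]
        constructor
        · intro h i; exact congrFun h i
        · intro h; exact funext fun i => h i
      rw [this]
      refine isOpen_iInter_of_finite fun i => ?_
      have h2 : {τ : ℕ → Bool | τ i = σ i} = (fun τ : ℕ → Bool => τ (i:ℕ)) ⁻¹' {σ (i:ℕ)} := rfl
      rw [h2]
      exact (continuous_apply (i : ℕ)).isOpen_preimage _ (isOpen_discrete _)
    exact hopen.mem_nhds rfl
  have hΦcont : Continuous Φ := by
    refine continuous_iff_continuousAt.2 fun σ => ?_
    rw [ContinuousAt, Metric.tendsto_nhds]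
    intro ε hε
    obtain ⟨n, hn⟩ := exists_pow_lt_of_lt_one (half_pos hε) (by norm_num : (2:ℝ)⁻¹ < 1)
    refine Filter.eventually_of_mem (hagree_nhds σ n) ?_
    intro τ hτ
    have := hclose τ σ n hτ
    calc dist (Φ τ) (Φ σ) ≤ 2 * (2:ℝ)⁻¹ ^ n := this
      _ < 2 * (ε / 2) := by linarith
      _ = ε := by ring
  refine ⟨Set.range Φ, ?_, ⟨?_, ?_⟩, ⟨Φ (fun _ => false), Set.mem_range_self _⟩, ?_⟩
  · rintro x ⟨σ, rfl⟩
    exact hΦP σ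
  · exact (isCompact_range hΦcont).isClosed
  · -- accumulation points
    rintro x ⟨σ, rfl⟩
    rw [accPt_iff_nhds]
    intro U hU
    obtain ⟨ε, hε, hball⟩ := Metric.mem_nhds_iff.1 hU
    obtain ⟨n, hn⟩ := exists_pow_lt_of_lt_one (half_pos hε) (by norm_num : (2:ℝ)⁻¹ < 1)
    set τ : ℕ → Bool := Function.update σ n (!(σ n)) with hτdef
    have hτσ : τ ≠ σ := by
      intro h
      have := congrFun h n
      rw [hτdef, Function.update_self] at this
      simp at this
    have hτres : res τ n = res σ n := by
      funext i
      rw [hτdef]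
      show Function.update σ n (!(σ n)) i = σ i
      exact Function.update_of_ne (Nat.ne_of_lt i.isLt) _ _
    refine ⟨Φ τ, ⟨?_, Set.mem_range_self _⟩, fun h => hτσ (hΦinj h)⟩
    apply hball
    rw [Metric.mem_ball]
    calc dist (Φ τ) (Φ σ) ≤ 2 * (2:ℝ)⁻¹ ^ n := hclose τ σ n hτres
      _ < 2 * (ε / 2) := by linarith
      _ = ε := by ring
  · -- SkewSet
    rintro x ⟨σ₁, rfl⟩ y ⟨σ₂, rfl⟩ v ⟨σ₃, rfl⟩ w ⟨σ₄, rfl⟩ hxy hvw hsets heq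
    have key : ∀ σ τ : ℕ → Bool, ∃ m, ∀ n, m ≤ n → σ ≠ τ → res σ n ≠ res τ n := by
      intro σ τ
      by_cases h : σ = τ
      · exact ⟨0, fun n _ hne => absurd h hne⟩
      · obtain ⟨i, hi⟩ := Function.ne_iff.1 h
        refine ⟨i+1, fun n hn _ hEq => hi ?_⟩
        exact congrFun hEq ⟨i, lt_of_lt_of_le (Nat.lt_succ_self i) hn⟩
    choose m hm using key
    set N := max (max (m σ₁ σ₂) (m σ₃ σ₄))
      (max (max (m σ₁ σ₃) (m σ₂ σ₄)) (max (m σ₁ σ₄) (m σ₂ σ₃))) with hN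
    have hrev : ∀ σ τ, m σ τ ≤ N → res σ N = res τ N → σ = τ := by
      intro σ τ hle h
      by_contra hne
      exact hm σ τ N hle hne h
    have hb12 : m σ₁ σ₂ ≤ N := le_trans (le_max_left _ _) (le_max_left _ _)
    have hb34 : m σ₃ σ₄ ≤ N := le_trans (le_max_right _ _) (le_max_left _ _)
    have hb13 : m σ₁ σ₃ ≤ N :=
      le_trans (le_trans (le_max_left _ _) (le_max_left _ _)) (le_max_right _ _)
    have hb24 : m σ₂ σ₄ ≤ N :=
      le_trans (le_trans (le_max_right _ _) (le_max_left _ _)) (le_max_right _ _)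
    have hb14 : m σ₁ σ₄ ≤ N :=
      le_trans (le_trans (le_max_left _ _) (le_max_right _ _)) (le_max_right _ _)
    have hb23 : m σ₂ σ₃ ≤ N :=
      le_trans (le_trans (le_max_right _ _) (le_max_right _ _)) (le_max_right _ _)
    have hne12 : σ₁ ≠ σ₂ := fun h => hxy (congrArg Φ h)
    have hne34 : σ₃ ≠ σ₄ := fun h => hvw (congrArg Φ h)
    refine hquad N (res σ₁ N) (res σ₂ N) (res σ₃ N) (res σ₄ N)
      (hm σ₁ σ₂ N hb12 hne12) (hm σ₃ σ₄ N hb34 hne34) ?_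
      (Φ σ₁) (hΦball σ₁ N) (Φ σ₂) (hΦball σ₂ N)
      (Φ σ₃) (hΦball σ₃ N) (Φ σ₄) (hΦball σ₄ N) heq
    rintro (⟨h1, h2⟩ | ⟨h1, h2⟩)
    · have e1 : σ₁ = σ₃ := hrev σ₁ σ₃ hb13 h1
      have e2 : σ₂ = σ₄ := hrev σ₂ σ₄ hb24 h2
      exact hsets (by rw [e1, e2])
    · have e1 : σ₁ = σ₄ := hrev σ₁ σ₄ hb14 h1
      have e2 : σ₂ = σ₃ := hrev σ₂ σ₃ hb23 h2
      exact hsets (by rw [e1, e2, Set.pair_comm])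

end Work

theorem stmt17 {G : Type*} [AddGroup G] [TopologicalSpace G] [IsTopologicalAddGroup G]
    [PolishSpace G] (P : Set G) (hP : Perfect P) (hPne : P.Nonempty) :
    ∃ Q ⊆ P, Perfect Q ∧ Q.Nonempty ∧ SkewSet Q := by
  letI := TopologicalSpace.upgradeIsCompletelyMetrizable G
  exact main P hP hPne
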